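/- Let w₁ ∈ ℂ be nonzero, m ∈ ℤ, θ ∈ (0, π/4], and let Φ ∈ ℝ satisfy arg(w₁) + Φ = mπ/2 − θ (modulo 2π). Let a ∈ ℝ and φ ∈ (0,1). For b ∈ ℝ, let I₁(b) be the binary-input mutual information of the per-component one-bit receiver with gain w₁ and inputs x₁ = a·e^{iΦ} (probability φ) and x₂ = b·e^{iΦ} (probability 1−φ). Then I₁(b) converges, as b → ∞, to f_φ(p₁) where p₁ = Q(−|w₁|·a·cos θ)·Q(−|w₁|·a·sin θ). -/

import Mathlib

open MeasureTheory Real Filter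

/-- The standard Gaussian tail function `Q(x) = ∫_x^∞ (2π)^{-1/2} e^{-u²/2} du`. -/
noncomputable def gaussQ (x : ℝ) : ℝ :=
  ∫ u in Set.Ioi x, (Real.sqrt (2 * Real.pi))⁻¹ * Real.exp (-u ^ 2 / 2)

/-- `η(t) = -t log t` (with `η(0) = 0`, automatic since `Real.log 0 = 0`). -/
noncomputable def eta (t : ℝ) : ℝ := -t * Real.log t

/-- The binary entropy function `h(p) = -p log p - (1-p) log (1-p)`. -/
noncomputable def binEnt (p : ℝ) : ℝ := eta p + eta (1 - p)

/-- Boundary-extended Gaussian tail for a `k`-point ADC with thresholds `q`. -/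
noncomputable def Qb (k : ℕ) (q : ℕ → ℝ) (t : ℝ) (l : ℕ) : ℝ :=
  if l = 0 then 1 else if l = k then 0 else gaussQ (q l - t)

/-- `p_l(t) = Q(q_{l-1} - t) - Q(q_l - t)` for the `k`-point ADC. -/
noncomputable def adcP (k : ℕ) (q : ℕ → ℝ) (t : ℝ) (l : ℕ) : ℝ :=
  Qb k q t (l - 1) - Qb k q t l

/-- Sign value of a Boolean: `true ↦ +1`, `false ↦ -1`. -/
noncomputable def sgnb (b : Bool) : ℝ := if b then 1 else -1

/-- Transition probability of the complex Gaussian channel with gain `w` followed by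
per-component one-bit ADCs: `P((s_R,s_I)|x) = Q(-s_R·Re(wx))·Q(-s_I·Im(wx))`. -/
noncomputable def p1bitC (w x : ℂ) (s : Bool × Bool) : ℝ :=
  gaussQ (-(sgnb s.1) * (w * x).re) * gaussQ (-(sgnb s.2) * (w * x).im)

/-- Binary-input mutual information of the complex Gaussian channel with gain `w`
followed by per-component one-bit ADCs, input `x₁` w.p. `φ` and `x₂` w.p. `1-φ`. -/
noncomputable def miOneBitC (w : ℂ) (φ : ℝ) (x₁ x₂ : ℂ) : ℝ :=
  ∑ s : Bool × Bool,
    (eta (φ * p1bitC w x₁ s + (1 - φ) * p1bitC w x₂ s)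
      - φ * eta (p1bitC w x₁ s) - (1 - φ) * eta (p1bitC w x₂ s))

/-- Transition probability of the complex Gaussian channel with gain `w` followed by a
`(k_R, k_I)`-point per-component receiver with thresholds `qR`, `qI`:
`P((i,l)|x) = p_{R,i}(Re(wx)) · p_{I,l}(Im(wx))`. -/
noncomputable def pADCC (w : ℂ) (kR kI : ℕ) (qR qI : ℕ → ℝ) (x : ℂ) (y : ℕ × ℕ) : ℝ :=
  adcP kR qR ((w * x).re) y.1 * adcP kI qI ((w * x).im) y.2

/-- Binary-input mutual information of the complex Gaussian channel with gain `w`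
followed by a `(k_R, k_I)`-point per-component receiver, input `x₁` w.p. `φ` and
`x₂` w.p. `1-φ`. -/
noncomputable def miADCC (w : ℂ) (kR kI : ℕ) (qR qI : ℕ → ℝ) (φ : ℝ) (x₁ x₂ : ℂ) : ℝ :=
  ∑ y ∈ Finset.Icc 1 kR ×ˢ Finset.Icc 1 kI,
    (eta (φ * pADCC w kR kI qR qI x₁ y + (1 - φ) * pADCC w kR kI qR qI x₂ y)
      - φ * eta (pADCC w kR kI qR qI x₁ y) - (1 - φ) * eta (pADCC w kR kI qR qI x₂ y))

/-- `f_φ(p) = h(φ(1-p)) - φ·h(p)`. -/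
noncomputable def fphi (φ p : ℝ) : ℝ := binEnt (φ * (1 - p)) - φ * binEnt p

noncomputable def gpdf (u : ℝ) : ℝ := (Real.sqrt (2 * Real.pi))⁻¹ * Real.exp (-u ^ 2 / 2)

lemma gpdf_eq : gpdf = fun u => (Real.sqrt (2 * Real.pi))⁻¹ * Real.exp (-(2⁻¹:ℝ) * u ^ 2) := by
  funext u; simp only [gpdf]; ring_nf

lemma integrable_gpdf : Integrable gpdf := by
  rw [gpdf_eq]; exact (integrable_exp_neg_mul_sq (by norm_num)).const_mul _

lemma integral_gpdf : ∫ u : ℝ, gpdf u = 1 := by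
  rw [gpdf_eq, MeasureTheory.integral_const_mul, integral_gaussian,
    show (π / 2⁻¹ : ℝ) = 2 * π by ring,
    inv_mul_cancel₀ (ne_of_gt (Real.sqrt_pos.mpr (by positivity)))]

lemma gaussQ_eq (x : ℝ) : gaussQ x = ∫ u, Set.indicator (Set.Ioi x) gpdf u := by
  rw [MeasureTheory.integral_indicator measurableSet_Ioi]; rfl

lemma gaussQ_tendsto_atTop : Tendsto gaussQ atTop (nhds 0) := by
  have h : Tendsto (fun x : ℝ => ∫ u, Set.indicator (Set.Ioi x) gpdf u) atTop
      (nhds (∫ _ : ℝ, (0:ℝ))) := by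
    apply tendsto_integral_filter_of_dominated_convergence (fun u => |gpdf u|)
    · filter_upwards with x
      exact integrable_gpdf.aestronglyMeasurable.indicator measurableSet_Ioi
    · filter_upwards with x
      filter_upwards with u
      simpa [Real.norm_eq_abs] using norm_indicator_le_norm_self gpdf u (s := Set.Ioi x)
    · exact integrable_gpdf.abs
    · filter_upwards with u
      apply Tendsto.congr' _ tendsto_const_nhds
      filter_upwards [eventually_ge_atTop u] with x hx
      simp [Set.indicator_of_notMem, not_lt.mpr hx]
  simp only [integral_zero] at h
  exact Tendsto.congr (fun x => (gaussQ_eq x).symm) h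

lemma gaussQ_tendsto_atBot : Tendsto gaussQ atBot (nhds 1) := by
  have h : Tendsto (fun x : ℝ => ∫ u, Set.indicator (Set.Ioi x) gpdf u) atBot
      (nhds (∫ u : ℝ, gpdf u)) := by
    apply tendsto_integral_filter_of_dominated_convergence (fun u => |gpdf u|)
    · filter_upwards with x
      exact integrable_gpdf.aestronglyMeasurable.indicator measurableSet_Ioi
    · filter_upwards with x
      filter_upwards with u
      simpa [Real.norm_eq_abs] using norm_indicator_le_norm_self gpdf u (s := Set.Ioi x)
    · exact integrable_gpdf.abs
    · filter_upwards with u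
      apply Tendsto.congr' _ tendsto_const_nhds
      filter_upwards [eventually_lt_atBot u] with x hx
      simp [Set.indicator_of_mem, hx]
  rw [integral_gpdf] at h
  exact Tendsto.congr (fun x => (gaussQ_eq x).symm) h

lemma gaussQ_neg_add (t : ℝ) : gaussQ (-t) + gaussQ t = 1 := by
  have heven : ∀ x : ℝ, gpdf (-x) = gpdf x := fun x => by simp [gpdf]
  have h1 : gaussQ (-t) = ∫ x in Set.Iic t, gpdf x := by
    have h := integral_comp_neg_Ioi (-t) gpdf
    rw [neg_neg] at h
    rw [← h]
    show (∫ x in Set.Ioi (-t), gpdf x) = _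
    simp_rw [heven]
  have h2 : gaussQ t = ∫ x in Set.Ioi t, gpdf x := rfl
  rw [h1, h2, intervalIntegral.integral_Iic_add_Ioi integrable_gpdf.integrableOn
    integrable_gpdf.integrableOn, integral_gpdf]

lemma eta_zero : eta 0 = 0 := by simp [eta]
lemma eta_one : eta 1 = 0 := by simp [eta]

lemma continuous_eta : Continuous eta := by
  have h : eta = fun x => -(x * Real.log x) := by funext x; simp [eta]
  rw [h]; exact Real.continuous_mul_log.neg

lemma eta_mul {φ : ℝ} (hφ : 0 < φ) (x : ℝ) :
    eta (φ * x) = φ * eta x - φ * x * Real.log φ := by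
  rcases eq_or_ne x 0 with rfl | hx
  · simp [eta]
  · rw [eta, eta, Real.log_mul (ne_of_gt hφ) hx]; ring

lemma eta_key {φ : ℝ} (hφ : 0 < φ) (p r1 r2 r3 : ℝ) (h : p + r1 + r2 + r3 = 1) :
    eta (φ * p + (1 - φ)) - φ * eta p + (eta (φ * r1) - φ * eta r1)
      + (eta (φ * r2) - φ * eta r2) + (eta (φ * r3) - φ * eta r3) = fphi φ p := by
  rw [fphi, binEnt, binEnt, show (1:ℝ) - φ * (1 - p) = φ * p + (1 - φ) by ring,
    eta_mul hφ, eta_mul hφ, eta_mul hφ, eta_mul hφ]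
  linear_combination (-(φ * Real.log φ)) * h

lemma sum_eta_limit {φ : ℝ} (hφ : 0 < φ) (q : Bool × Bool → ℝ)
    (hq : ∑ s : Bool × Bool, q s = 1) (t : Bool × Bool) :
    ∑ s : Bool × Bool,
      (eta (φ * q s + (1 - φ) * (if s = t then (1:ℝ) else 0))
        - φ * eta (q s) - (1 - φ) * eta (if s = t then (1:ℝ) else 0))
      = fphi φ (q t) := by
  simp only [Fintype.sum_prod_type, Fintype.sum_bool] at hq ⊢
  rcases t with ⟨b1, b2⟩
  cases b1 <;> cases b2 <;>
    simp only [Prod.mk.injEq, and_true, true_and, and_false, false_and, if_true, if_false,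
      eta_zero, eta_one, mul_one, mul_zero, add_zero, sub_zero, reduceCtorEq,
      show (true = false) = False by simp, show (false = true) = False by simp,
      eq_self_iff_true, if_neg, if_pos]
  · linear_combination eta_key hφ (q (false, false)) (q (true, true)) (q (true, false)) (q (false, true)) (by linarith)
  · linear_combination eta_key hφ (q (false, true)) (q (true, true)) (q (true, false)) (q (false, false)) (by linarith)
  · linear_combination eta_key hφ (q (true, false)) (q (true, true)) (q (false, true)) (q (false, false)) (by linarith)
  · linear_combination eta_key hφ (q (true, true)) (q (true, false)) (q (false, true)) (q (false, false)) (by linarith)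

lemma sgnb_true : sgnb true = 1 := rfl
lemma sgnb_false : sgnb false = -1 := rfl

lemma tendsto_gaussQ_mul {c : ℝ} (hc : c ≠ 0) (s : Bool) :
    Tendsto (fun b : ℝ => gaussQ (-(sgnb s) * (b * c))) atTop
      (nhds (if 0 < sgnb s * c then 1 else 0)) := by
  have hfun : ∀ b : ℝ, -(sgnb s) * (b * c) = b * (-(sgnb s * c)) := fun b => by ring
  simp_rw [hfun]
  rcases lt_or_gt_of_ne (show sgnb s * c ≠ 0 by cases s <;> simp [sgnb, hc]) with h | h
  · rw [if_neg (not_lt.mpr h.le)]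
    exact gaussQ_tendsto_atTop.comp (tendsto_id.atTop_mul_const' (by linarith))
  · rw [if_pos h]
    exact gaussQ_tendsto_atBot.comp (tendsto_id.atTop_mul_const_of_neg' (by linarith))

lemma sgn_mul_abs {c : ℝ} (hc : c ≠ 0) (a : ℝ) :
    -(sgnb (decide (0 < c))) * (a * c) = -(a * |c|) := by
  rcases hc.lt_or_gt with h | h
  · rw [decide_eq_false (not_lt.mpr h.le), sgnb_false, abs_of_neg h]; ring
  · rw [decide_eq_true h, sgnb_true, abs_of_pos h]; ring

lemma cos_sin_abs (m n : ℤ) (θ : ℝ) (h0 : 0 < θ) (h4 : θ ≤ π/4) :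
    (|Real.cos ((m:ℝ) * π / 2 - θ + (n:ℝ) * (2*π))| = Real.cos θ
        ∧ |Real.sin ((m:ℝ) * π / 2 - θ + (n:ℝ) * (2*π))| = Real.sin θ)
    ∨ (|Real.cos ((m:ℝ) * π / 2 - θ + (n:ℝ) * (2*π))| = Real.sin θ
        ∧ |Real.sin ((m:ℝ) * π / 2 - θ + (n:ℝ) * (2*π))| = Real.cos θ) := by
  have hπ := Real.pi_pos
  have hc : 0 < Real.cos θ := Real.cos_pos_of_mem_Ioo ⟨by linarith, by linarith⟩
  have hs : 0 < Real.sin θ := Real.sin_pos_of_pos_of_lt_pi h0 (by linarith)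
  rw [Real.cos_add_int_mul_two_pi, Real.sin_add_int_mul_two_pi]
  have hcast : (m:ℝ) = ((m % 4 : ℤ):ℝ) + 4 * ((m / 4 : ℤ):ℝ) := by
    have h := Int.emod_add_mul_ediv m 4
    have h2 : ((m % 4 + 4 * (m / 4) : ℤ):ℝ) = (m:ℝ) := by rw [h]
    push_cast at h2
    linarith
  have hm : (m:ℝ) * π / 2 - θ = (((m % 4 : ℤ):ℝ) * π / 2 - θ) + ((m / 4 : ℤ):ℝ) * (2 * π) := by
    rw [hcast]; push_cast; ring
  rw [hm, Real.cos_add_int_mul_two_pi, Real.sin_add_int_mul_two_pi]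
  have h0m : 0 ≤ m % 4 := Int.emod_nonneg m (by norm_num)
  have h4m : m % 4 < 4 := Int.emod_lt_of_pos m (by norm_num)
  set j := m % 4 with hj
  clear_value j
  interval_cases j
  · left
    rw [show (((0:ℤ):ℝ) * π / 2 - θ) = -θ by push_cast; ring, Real.cos_neg, Real.sin_neg,
      abs_neg, abs_of_pos hc, abs_of_pos hs]
    exact ⟨rfl, rfl⟩
  · right
    rw [show (((1:ℤ):ℝ) * π / 2 - θ) = π/2 - θ by push_cast; ring, Real.cos_pi_div_two_sub,
      Real.sin_pi_div_two_sub, abs_of_pos hs, abs_of_pos hc]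
    exact ⟨rfl, rfl⟩
  · left
    rw [show (((2:ℤ):ℝ) * π / 2 - θ) = π - θ by push_cast; ring, Real.cos_pi_sub,
      Real.sin_pi_sub, abs_neg, abs_of_pos hc, abs_of_pos hs]
    exact ⟨rfl, rfl⟩
  · right
    rw [show (((3:ℤ):ℝ) * π / 2 - θ) = π + (π/2 - θ) by push_cast; ring, Real.cos_add,
      Real.sin_add, Real.cos_pi, Real.sin_pi, Real.cos_pi_div_two_sub, Real.sin_pi_div_two_sub]
    rw [show (-1) * Real.sin θ - 0 * Real.cos θ = -Real.sin θ by ring,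
      show 0 * Real.sin θ + (-1) * Real.cos θ = -Real.cos θ by ring,
      abs_neg, abs_neg, abs_of_pos hs, abs_of_pos hc]
    exact ⟨rfl, rfl⟩


/-- With `θ ∈ (0, π/4]`, `arg(w₁) + Φ ≡ mπ/2 - θ (mod 2π)`, and inputs `x₁ = a·e^{iΦ}`
(w.p. `φ`) and `x₂ = b·e^{iΦ}` (w.p. `1-φ`), the binary-input mutual information
`I₁(b)` of the per-component one-bit receiver with gain `w₁` converges, as `b → ∞`,
to `f_φ(p₁)` where `p₁ = Q(-|w₁|·a·cos θ)·Q(-|w₁|·a·sin θ)`. -/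
theorem miOneBitC_tendsto (w₁ : ℂ) (hw₁ : w₁ ≠ 0) (m : ℤ) (θ Φ : ℝ)
    (hθ : θ ∈ Set.Ioc (0 : ℝ) (π / 4))
    (hΦ : ∃ n : ℤ, Complex.arg w₁ + Φ = m * π / 2 - θ + n * (2 * π))
    (a φ : ℝ) (hφ : φ ∈ Set.Ioo (0 : ℝ) 1) :
    Tendsto
      (fun b : ℝ => miOneBitC w₁ φ
        ((a : ℂ) * Complex.exp ((Φ : ℂ) * Complex.I))
        ((b : ℂ) * Complex.exp ((Φ : ℂ) * Complex.I)))
      atTop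
      (nhds (fphi φ
        (gaussQ (-(‖w₁‖ * a * Real.cos θ))
          * gaussQ (-(‖w₁‖ * a * Real.sin θ))))) := by
  obtain ⟨hθ0, hθ4⟩ := hθ
  obtain ⟨n, hn⟩ := hΦ
  have hπ := Real.pi_pos
  set r : ℝ := ‖w₁‖ with hrdef
  have hr0 : 0 < r := norm_pos_iff.mpr hw₁
  set α : ℝ := Complex.arg w₁ + Φ with hαdef
  have hpair := cos_sin_abs m n θ hθ0 hθ4
  rw [← hn] at hpair
  have hc0 : 0 < Real.cos θ := Real.cos_pos_of_mem_Ioo ⟨by linarith, by linarith⟩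
  have hs0 : 0 < Real.sin θ := Real.sin_pos_of_pos_of_lt_pi hθ0 (by linarith)
  have hcosα : Real.cos α ≠ 0 := by
    intro h
    rcases hpair with ⟨h1, _⟩ | ⟨h1, _⟩ <;> rw [h, abs_zero] at h1 <;> linarith
  have hsinα : Real.sin α ≠ 0 := by
    intro h
    rcases hpair with ⟨_, h1⟩ | ⟨_, h1⟩ <;> rw [h, abs_zero] at h1 <;> linarith
  set cR : ℝ := r * Real.cos α with hcRdef
  set cI : ℝ := r * Real.sin α with hcIdef
  have hcR : cR ≠ 0 := mul_ne_zero (ne_of_gt hr0) hcosα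
  have hcI : cI ≠ 0 := mul_ne_zero (ne_of_gt hr0) hsinα
  have hw : w₁ * Complex.exp ((Φ:ℂ) * Complex.I) = (r:ℂ) * Complex.exp ((α:ℂ) * Complex.I) := by
    conv_lhs => rw [← Complex.norm_mul_exp_arg_mul_I w₁]
    rw [mul_assoc, ← Complex.exp_add]
    congr 2
    rw [hαdef]
    push_cast
    ring
  have hre : ∀ b : ℝ, (w₁ * ((b:ℂ) * Complex.exp ((Φ:ℂ) * Complex.I))).re = b * cR := by
    intro b
    rw [show w₁ * ((b:ℂ) * Complex.exp ((Φ:ℂ) * Complex.I))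
        = (b:ℂ) * ((r:ℂ) * Complex.exp ((α:ℂ) * Complex.I)) by rw [← hw]; ring]
    rw [Complex.re_ofReal_mul, Complex.re_ofReal_mul, Complex.exp_ofReal_mul_I_re, ← hcRdef]
  have him : ∀ b : ℝ, (w₁ * ((b:ℂ) * Complex.exp ((Φ:ℂ) * Complex.I))).im = b * cI := by
    intro b
    rw [show w₁ * ((b:ℂ) * Complex.exp ((Φ:ℂ) * Complex.I))
        = (b:ℂ) * ((r:ℂ) * Complex.exp ((α:ℂ) * Complex.I)) by rw [← hw]; ring]
    rw [Complex.im_ofReal_mul, Complex.im_ofReal_mul, Complex.exp_ofReal_mul_I_im, ← hcIdef]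
  set tstar : Bool × Bool := (decide (0 < cR), decide (0 < cI)) with htstar
  have hA : ∀ s : Bool × Bool, p1bitC w₁ ((a:ℂ) * Complex.exp ((Φ:ℂ) * Complex.I)) s
      = gaussQ (-(sgnb s.1) * (a * cR)) * gaussQ (-(sgnb s.2) * (a * cI)) := by
    intro s
    simp only [p1bitC]
    rw [hre a, him a]
  have hprod_lim : ∀ s : Bool × Bool,
      ((if 0 < sgnb s.1 * cR then (1:ℝ) else 0) * (if 0 < sgnb s.2 * cI then (1:ℝ) else 0))
        = (if s = tstar then (1:ℝ) else 0) := by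
    rintro ⟨u, v⟩
    rw [htstar]
    rcases hcR.lt_or_gt with h1 | h1 <;> rcases hcI.lt_or_gt with h2 | h2 <;>
      cases u <;> cases v <;>
      simp [sgnb, Prod.ext_iff, h1, h2, h1.not_gt, h2.not_gt, neg_pos]
  have hF : ∀ s : Bool × Bool,
      Tendsto (fun b : ℝ => p1bitC w₁ ((b:ℂ) * Complex.exp ((Φ:ℂ) * Complex.I)) s)
        atTop (nhds (if s = tstar then (1:ℝ) else 0)) := by
    intro s
    rw [← hprod_lim s]
    refine Tendsto.congr (fun b => ?_) ((tendsto_gaussQ_mul hcR s.1).mul (tendsto_gaussQ_mul hcI s.2))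
    simp only [p1bitC]
    rw [hre b, him b]
  have hsumA : ∑ s : Bool × Bool, p1bitC w₁ ((a:ℂ) * Complex.exp ((Φ:ℂ) * Complex.I)) s = 1 := by
    have h1 := gaussQ_neg_add (a * cR)
    have h2 := gaussQ_neg_add (a * cI)
    simp only [hA, Fintype.sum_prod_type, Fintype.sum_bool, sgnb_true, sgnb_false, neg_neg,
      one_mul, neg_mul]
    linear_combination (gaussQ (-(a * cR)) + gaussQ (a * cR)) * h2 + h1
  have hterm : ∀ s : Bool × Bool, Tendsto (fun b : ℝ =>
      eta (φ * p1bitC w₁ ((a:ℂ) * Complex.exp ((Φ:ℂ) * Complex.I)) s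
          + (1 - φ) * p1bitC w₁ ((b:ℂ) * Complex.exp ((Φ:ℂ) * Complex.I)) s)
        - φ * eta (p1bitC w₁ ((a:ℂ) * Complex.exp ((Φ:ℂ) * Complex.I)) s)
        - (1 - φ) * eta (p1bitC w₁ ((b:ℂ) * Complex.exp ((Φ:ℂ) * Complex.I)) s)) atTop
      (nhds (eta (φ * p1bitC w₁ ((a:ℂ) * Complex.exp ((Φ:ℂ) * Complex.I)) s
          + (1 - φ) * (if s = tstar then (1:ℝ) else 0))
        - φ * eta (p1bitC w₁ ((a:ℂ) * Complex.exp ((Φ:ℂ) * Complex.I)) s)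
        - (1 - φ) * eta (if s = tstar then (1:ℝ) else 0))) := by
    intro s
    have h1 : Tendsto (fun b : ℝ =>
        φ * p1bitC w₁ ((a:ℂ) * Complex.exp ((Φ:ℂ) * Complex.I)) s
          + (1 - φ) * p1bitC w₁ ((b:ℂ) * Complex.exp ((Φ:ℂ) * Complex.I)) s) atTop
        (nhds (φ * p1bitC w₁ ((a:ℂ) * Complex.exp ((Φ:ℂ) * Complex.I)) s
          + (1 - φ) * (if s = tstar then (1:ℝ) else 0))) :=
      tendsto_const_nhds.add ((hF s).const_mul (1 - φ))
    exact (((continuous_eta.tendsto _).comp h1).sub tendsto_const_nhds).sub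
      (((continuous_eta.tendsto _).comp (hF s)).const_mul (1 - φ))
  have hsum := tendsto_finset_sum Finset.univ (fun s (_ : s ∈ Finset.univ) => hterm s)
  have hliml := sum_eta_limit hφ.1 (fun s => p1bitC w₁ ((a:ℂ) * Complex.exp ((Φ:ℂ) * Complex.I)) s)
    hsumA tstar
  have hAt : p1bitC w₁ ((a:ℂ) * Complex.exp ((Φ:ℂ) * Complex.I)) tstar
      = gaussQ (-(a * (r * |Real.cos α|))) * gaussQ (-(a * (r * |Real.sin α|))) := by
    rw [hA tstar, htstar]
    have h1 := sgn_mul_abs hcR a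
    have h2 := sgn_mul_abs hcI a
    rw [show a * |cR| = a * (r * |Real.cos α|) by rw [hcRdef, abs_mul, abs_of_pos hr0]] at h1
    rw [show a * |cI| = a * (r * |Real.sin α|) by rw [hcIdef, abs_mul, abs_of_pos hr0]] at h2
    rw [show ((decide (0 < cR), decide (0 < cI)) : Bool × Bool).1 = decide (0 < cR) from rfl,
      show ((decide (0 < cR), decide (0 < cI)) : Bool × Bool).2 = decide (0 < cI) from rfl,
      h1, h2]
  have hval : gaussQ (-(a * (r * |Real.cos α|))) * gaussQ (-(a * (r * |Real.sin α|)))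
      = gaussQ (-(r * a * Real.cos θ)) * gaussQ (-(r * a * Real.sin θ)) := by
    rcases hpair with ⟨h1, h2⟩ | ⟨h1, h2⟩ <;> rw [h1, h2]
    · rw [show -(a * (r * Real.cos θ)) = -(r * a * Real.cos θ) by ring,
        show -(a * (r * Real.sin θ)) = -(r * a * Real.sin θ) by ring]
    · rw [show -(a * (r * Real.sin θ)) = -(r * a * Real.sin θ) by ring,
        show -(a * (r * Real.cos θ)) = -(r * a * Real.cos θ) by ring, mul_comm]
  simp only [miOneBitC]
  have heq : fphi φ (gaussQ (-(r * a * Real.cos θ)) * gaussQ (-(r * a * Real.sin θ)))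
      = ∑ s : Bool × Bool,
        (eta (φ * p1bitC w₁ ((a:ℂ) * Complex.exp ((Φ:ℂ) * Complex.I)) s
            + (1 - φ) * (if s = tstar then (1:ℝ) else 0))
          - φ * eta (p1bitC w₁ ((a:ℂ) * Complex.exp ((Φ:ℂ) * Complex.I)) s)
          - (1 - φ) * eta (if s = tstar then (1:ℝ) else 0)) := by
    rw [hliml, hAt, hval]
  rw [heq]
  exact hsum
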